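/- Let n ≥ 1, let q be a nondegenerate quadratic form on ℝ^{n-1}, and let f(y,z) = z + q(y) on ℝ^{n-1} × ℝ. Let X be a C¹ vector field defined on a neighborhood of 0 in ℝ^{n-1} × ℝ such that X(0) = 0, the z-component of X(y,0) vanishes for all y (X is tangent to the boundary {z = 0}), and the linearization A = DX(0) satisfies: x ↦ D(q(y)+z²)(x)[Ax] is negative for all x ≠ 0. Then there exists δ > 0 such that for every (y,z) ≠ (0,0) with |(y,z)| < δ and z ≥ 0, one has Df(y,z)[X(y,z)] < 0. -/

import Mathlib

private lemma aux_deriv_q (n : ℕ) (q : QuadraticForm ℝ (Fin (n - 1) → ℝ))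
    (Pc : (Fin (n-1) → ℝ) →L[ℝ] (Fin (n-1) → ℝ) →L[ℝ] ℝ)
    (hPc : ∀ a b, Pc a b = QuadraticMap.polar q a b)
    (y : Fin (n-1) → ℝ) :
    HasFDerivAt (fun y => (q y : ℝ)) (Pc y) y := by
  have hsymm : ∀ a b, Pc a b = Pc b a := fun a b => by
    rw [hPc, hPc, QuadraticMap.polar_comm]
  have hqq : ∀ a, Pc a a = 2 * q a := fun a => by
    rw [hPc, QuadraticMap.polar_self]; simp [two_smul]; ring
  have h2 : HasFDerivAt (fun y => Pc y y)
      (Pc.precompR _ y (ContinuousLinearMap.id ℝ _)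
        + Pc.precompL _ (ContinuousLinearMap.id ℝ _) y) y :=
    Pc.hasFDerivAt_of_bilinear (hasFDerivAt_id y) (hasFDerivAt_id y)
  have h3 : HasFDerivAt (fun y => (2:ℝ) * q y)
      (Pc.precompR _ y (ContinuousLinearMap.id ℝ _)
        + Pc.precompL _ (ContinuousLinearMap.id ℝ _) y) y := by
    have : (fun y => Pc y y) = fun y => (2:ℝ) * q y := funext fun a => hqq a
    rwa [this] at h2
  have h4 := h3.const_mul (1/2 : ℝ)
  have h5 : (fun y => (1/2 : ℝ) * ((2:ℝ) * q y)) = fun y => (q y : ℝ) := by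
    funext a; ring
  rw [h5] at h4
  refine h4.congr_fderiv ?_
  ext w
  simp [ContinuousLinearMap.precompR, ContinuousLinearMap.precompL]
  rw [hsymm w y]
  ring

private lemma aux_fderiv_fg (n : ℕ) (q : QuadraticForm ℝ (Fin (n - 1) → ℝ))
    (Pc : (Fin (n-1) → ℝ) →L[ℝ] (Fin (n-1) → ℝ) →L[ℝ] ℝ)
    (hPc : ∀ a b, Pc a b = QuadraticMap.polar q a b)
    (x v : (Fin (n-1) → ℝ) × ℝ) :
    fderiv ℝ (fun p : (Fin (n - 1) → ℝ) × ℝ => p.2 + q p.1) x v = v.2 + Pc x.1 v.1 ∧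
    fderiv ℝ (fun p : (Fin (n - 1) → ℝ) × ℝ => q p.1 + p.2 ^ 2) x v
      = Pc x.1 v.1 + 2 * x.2 * v.2 := by
  have hdq := aux_deriv_q n q Pc hPc
  have hf : HasFDerivAt (fun p : (Fin (n - 1) → ℝ) × ℝ => p.2 + q p.1)
      ((ContinuousLinearMap.snd ℝ _ ℝ) + (Pc x.1).comp (ContinuousLinearMap.fst ℝ _ ℝ)) x :=
    (hasFDerivAt_snd).add ((hdq x.1).comp x (hasFDerivAt_fst))
  have hg : HasFDerivAt (fun p : (Fin (n - 1) → ℝ) × ℝ => q p.1 + p.2 ^ 2)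
      ((Pc x.1).comp (ContinuousLinearMap.fst ℝ _ ℝ)
        + (x.2 • ContinuousLinearMap.snd ℝ _ ℝ + x.2 • ContinuousLinearMap.snd ℝ _ ℝ)) x := by
    have h2 : HasFDerivAt (fun p : (Fin (n - 1) → ℝ) × ℝ => p.2 ^ 2)
        (x.2 • ContinuousLinearMap.snd ℝ _ ℝ + x.2 • ContinuousLinearMap.snd ℝ _ ℝ) x := by
      have := (hasFDerivAt_snd (𝕜 := ℝ) (p := x) (E := Fin (n-1) → ℝ)).mul
        (hasFDerivAt_snd (𝕜 := ℝ) (p := x))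
      have hsq : (fun p : (Fin (n - 1) → ℝ) × ℝ => p.2 ^ 2)
          = fun p : (Fin (n - 1) → ℝ) × ℝ => p.2 * p.2 := by funext p; ring
      rw [hsq]; exact this
    exact ((hdq x.1).comp x (hasFDerivAt_fst)).add h2
  constructor
  · rw [hf.fderiv]; simp
  · rw [hg.fderiv]; simp; ring

private lemma aux_tangent_strict (n : ℕ)
    (X : ((Fin (n - 1) → ℝ) × ℝ) → ((Fin (n - 1) → ℝ) × ℝ))
    (A : ((Fin (n - 1) → ℝ) × ℝ) →L[ℝ] ((Fin (n - 1) → ℝ) × ℝ))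
    (hA : HasStrictFDerivAt X A 0)
    (htangent : ∀ y : Fin (n - 1) → ℝ, (X (y, 0)).2 = 0) :
    (∀ y : Fin (n-1) → ℝ, (A ((y, 0) : (Fin (n-1) → ℝ) × ℝ)).2 = 0) ∧
    (∀ ε > (0:ℝ), ∃ δ > (0:ℝ), ∀ a b : (Fin (n-1) → ℝ) × ℝ, ‖a‖ < δ → ‖b‖ < δ →
      ‖X a - X b - A (a - b)‖ ≤ ε * ‖a - b‖) := by
  constructor
  · intro y
    have hinl : HasFDerivAt (fun y : Fin (n-1) → ℝ => ((y, (0:ℝ)) : (Fin (n-1) → ℝ) × ℝ))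
        (ContinuousLinearMap.inl ℝ (Fin (n-1) → ℝ) ℝ) 0 :=
      (ContinuousLinearMap.inl ℝ (Fin (n-1) → ℝ) ℝ).hasFDerivAt
    have hx : HasFDerivAt X A ((fun y : Fin (n-1) → ℝ => ((y, (0:ℝ)))) 0) := by
      exact hA.hasFDerivAt
    have h1 : HasFDerivAt (fun y : Fin (n-1) → ℝ => (X (y, (0:ℝ))).2)
        ((ContinuousLinearMap.snd ℝ _ ℝ).comp
          (A.comp (ContinuousLinearMap.inl ℝ (Fin (n-1) → ℝ) ℝ))) 0 := by
      have hc1 := HasFDerivAt.comp (𝕜 := ℝ) (0 : Fin (n-1) → ℝ) hx hinl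
      have hc2 := HasFDerivAt.comp (𝕜 := ℝ) (0 : Fin (n-1) → ℝ)
        ((ContinuousLinearMap.snd ℝ (Fin (n-1) → ℝ) ℝ).hasFDerivAt) hc1
      rw [← ContinuousLinearMap.comp_assoc] at hc2
      exact hc2
    have h2 : HasFDerivAt (fun y : Fin (n-1) → ℝ => (X (y, (0:ℝ))).2)
        (0 : (Fin (n-1) → ℝ) →L[ℝ] ℝ) 0 := by
      simp only [htangent]
      exact hasFDerivAt_const 0 0
    have h3 := h1.unique h2
    have := congrFun (congrArg (fun L => (L : (Fin (n-1) → ℝ) →L[ℝ] ℝ).toFun) h3) y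
    simpa using this
  · intro ε hε
    have h := hA.isLittleO.def hε
    rw [Metric.eventually_nhds_iff] at h
    obtain ⟨δ, hδ, h⟩ := h
    refine ⟨δ, hδ, fun a b ha hb => ?_⟩
    have hd : dist ((a, b) : _ × _) ((0 : (Fin (n-1) → ℝ) × ℝ), (0 : (Fin (n-1) → ℝ) × ℝ)) < δ := by
      rw [Prod.dist_eq]
      simp only [dist_zero_right]
      exact max_lt ha hb
    have := h (y := (a, b)) hd
    simpa using this

private lemma aux_lam (n : ℕ)
    (Pc : (Fin (n-1) → ℝ) →L[ℝ] (Fin (n-1) → ℝ) →L[ℝ] ℝ)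
    (A : ((Fin (n - 1) → ℝ) × ℝ) →L[ℝ] ((Fin (n - 1) → ℝ) × ℝ))
    (hy2 : ∀ y : Fin (n-1) → ℝ, y ≠ 0 → Pc y (A (y, 0)).1 < 0) :
    ∃ lam > (0:ℝ), ∀ y : Fin (n-1) → ℝ, Pc y (A (y, 0)).1 ≤ -lam * ‖y‖^2 := by
  set h : (Fin (n-1) → ℝ) → ℝ := fun y => Pc y (A (y, 0)).1 with hh
  have hcont : Continuous h := by
    apply Continuous.clm_apply
    · exact Pc.continuous
    · exact (A.continuous.comp (continuous_id.prodMk continuous_const)).fst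
  have hhom : ∀ (t : ℝ) (u : Fin (n-1) → ℝ), h (t • u) = t^2 * h u := by
    intro t u
    have : ((t • u, (0:ℝ)) : (Fin (n-1) → ℝ) × ℝ) = t • ((u, 0) : (Fin (n-1) → ℝ) × ℝ) := by
      simp [Prod.smul_def]
    simp only [hh, this, map_smul]
    simp [Prod.smul_def]
    ring
  have h0 : h 0 = 0 := by simp [hh]
  by_cases hY : ∃ y₀ : Fin (n-1) → ℝ, y₀ ≠ 0
  · obtain ⟨y₀, hy₀⟩ := hY
    have hu₀ : (‖y₀‖⁻¹ • y₀) ∈ Metric.sphere (0 : Fin (n-1) → ℝ) 1 := by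
      simp [norm_smul, abs_of_nonneg (inv_nonneg.2 (norm_nonneg y₀)),
        inv_mul_cancel₀ (norm_ne_zero_iff.2 hy₀)]
    obtain ⟨m, hm_mem, hm⟩ := (isCompact_sphere (0 : Fin (n-1) → ℝ) 1).exists_isMaxOn
      ⟨_, hu₀⟩ hcont.continuousOn
    have hmne : m ≠ 0 := by
      intro hm0
      have : ‖m‖ = 1 := by simpa using hm_mem
      rw [hm0] at this; simp at this
    have hmneg : h m < 0 := hy2 m hmne
    refine ⟨-(h m), by linarith, fun y => ?_⟩
    by_cases hy : y = 0
    · simp [hy, h0]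
    · have hny : (0:ℝ) < ‖y‖ := norm_pos_iff.2 hy
      have hu : (‖y‖⁻¹ • y) ∈ Metric.sphere (0 : Fin (n-1) → ℝ) 1 := by
        simp [norm_smul, abs_of_nonneg (inv_nonneg.2 (norm_nonneg y)),
          inv_mul_cancel₀ (norm_ne_zero_iff.2 hy)]
      have hle : h (‖y‖⁻¹ • y) ≤ h m := hm hu
      have hrec : h y = ‖y‖^2 * h (‖y‖⁻¹ • y) := by
        rw [← hhom ‖y‖ (‖y‖⁻¹ • y), smul_inv_smul₀ (ne_of_gt hny)]
      show h y ≤ -(-(h m)) * ‖y‖^2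
      rw [hrec]
      have := mul_le_mul_of_nonneg_left hle (by positivity : (0:ℝ) ≤ ‖y‖^2)
      linarith
  · push_neg at hY
    refine ⟨1, one_pos, fun y => ?_⟩
    rw [hY y]
    simp [h0]

set_option maxHeartbeats 1000000 in
/-- Conclusion of the Proposition of Section 2.1 near a type N boundary critical
point: in the normal form `f(y,z) = z + q(y)` on `M = {z ≥ 0}`, a `C¹` vector
field `X` vanishing at `0`, tangent to the boundary `{z = 0}`, whose
linearization `A = DX(0)` makes `x ↦ D(q(y)+z²)(x)[Ax]` negative for `x ≠ 0`,
is a pseudo-gradient for `f` near `0`: `Df(x)[X(x)] < 0` for `x ≠ 0` near `0`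
with `z ≥ 0`. -/
theorem pseudo_gradient_near_boundary_critical_point (n : ℕ) (hn : 1 ≤ n)
    (q : QuadraticForm ℝ (Fin (n - 1) → ℝ))
    (hq : LinearMap.BilinForm.Nondegenerate q.polarBilin)
    (X : ((Fin (n - 1) → ℝ) × ℝ) → ((Fin (n - 1) → ℝ) × ℝ))
    (hX : ContDiffAt ℝ 1 X 0) (hX0 : X 0 = 0)
    (htangent : ∀ y : Fin (n - 1) → ℝ, (X (y, 0)).2 = 0)
    (hneg : ∀ x : (Fin (n - 1) → ℝ) × ℝ, x ≠ 0 →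
      fderiv ℝ (fun p : (Fin (n - 1) → ℝ) × ℝ => q p.1 + p.2 ^ 2) x (fderiv ℝ X 0 x) < 0) :
    ∃ δ > 0, ∀ x : (Fin (n - 1) → ℝ) × ℝ, x ≠ 0 → ‖x‖ < δ → 0 ≤ x.2 →
      fderiv ℝ (fun p : (Fin (n - 1) → ℝ) × ℝ => p.2 + q p.1) x (X x) < 0 := by
  classical
  obtain ⟨Pc, hPc⟩ : ∃ Pc : (Fin (n-1) → ℝ) →L[ℝ] (Fin (n-1) → ℝ) →L[ℝ] ℝ,
      ∀ a b, Pc a b = QuadraticMap.polar q a b := by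
    let e : ((Fin (n-1) → ℝ) →ₗ[ℝ] ℝ) ≃ₗ[ℝ] ((Fin (n-1) → ℝ) →L[ℝ] ℝ) :=
      LinearMap.toContinuousLinearMap
    refine ⟨LinearMap.toContinuousLinearMap (e.toLinearMap ∘ₗ q.polarBilin), fun a b => ?_⟩
    simp [e, QuadraticMap.polarBilin_apply_apply]
  have hdf : ∀ x v : (Fin (n-1) → ℝ) × ℝ,
      fderiv ℝ (fun p : (Fin (n - 1) → ℝ) × ℝ => p.2 + q p.1) x v = v.2 + Pc x.1 v.1 :=
    fun x v => (aux_fderiv_fg n q Pc hPc x v).1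
  have hdg : ∀ x v : (Fin (n-1) → ℝ) × ℝ,
      fderiv ℝ (fun p : (Fin (n - 1) → ℝ) × ℝ => q p.1 + p.2 ^ 2) x v
        = Pc x.1 v.1 + 2 * x.2 * v.2 :=
    fun x v => (aux_fderiv_fg n q Pc hPc x v).2
  obtain ⟨A, hAdef⟩ : ∃ A : ((Fin (n - 1) → ℝ) × ℝ) →L[ℝ] ((Fin (n - 1) → ℝ) × ℝ),
      fderiv ℝ X 0 = A := ⟨_, rfl⟩
  rw [hAdef] at hneg
  have hA : HasStrictFDerivAt X A 0 := hAdef ▸ hX.hasStrictFDerivAt one_ne_zero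
  obtain ⟨htl, hstrict⟩ := aux_tangent_strict n X A hA htangent
  have hneg' : ∀ x : (Fin (n-1) → ℝ) × ℝ, x ≠ 0 → Pc x.1 (A x).1 + 2 * x.2 * (A x).2 < 0 := by
    intro x hx
    have := hneg x hx
    rwa [hdg] at this
  set c := (A (((0 : Fin (n-1) → ℝ), (1:ℝ)) : (Fin (n-1) → ℝ) × ℝ)).2 with hcdef
  have hc : c < 0 := by
    have h1 := hneg' ((0 : Fin (n-1) → ℝ), (1:ℝ)) (by simp [Prod.ext_iff])
    have h0 : Pc 0 (A (((0 : Fin (n-1) → ℝ), (1:ℝ)) : (Fin (n-1) → ℝ) × ℝ)).1 = 0 := by simp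
    rw [show ((0 : Fin (n-1) → ℝ), (1:ℝ)).1 = (0 : Fin (n-1) → ℝ) from rfl] at h1
    rw [h0] at h1
    simp only [hcdef] at h1 ⊢
    linarith
  have hy2 : ∀ y : Fin (n-1) → ℝ, y ≠ 0 → Pc y (A ((y, 0) : (Fin (n-1) → ℝ) × ℝ)).1 < 0 := by
    intro y hy
    have := hneg' (y, 0) (by simp [Prod.ext_iff, hy])
    simpa using this
  obtain ⟨lam, hlam, hlam2⟩ := aux_lam n Pc A hy2
  -- constants
  set Cb : ℝ := ‖Pc‖ + 1 with hCbdef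
  have hCb : 0 < Cb := by positivity
  have hPb : ∀ a b : Fin (n-1) → ℝ, Pc a b ≤ Cb * ‖a‖ * ‖b‖ := by
    intro a b
    have h1 : Pc a b ≤ ‖Pc a b‖ := le_abs_self _
    have h2 : ‖Pc a b‖ ≤ ‖Pc‖ * ‖a‖ * ‖b‖ := Pc.le_opNorm₂ a b
    nlinarith [norm_nonneg a, norm_nonneg b, mul_nonneg (norm_nonneg a) (norm_nonneg b)]
  set CA : ℝ := ‖A‖ with hCAdef
  have hCA : 0 ≤ CA := norm_nonneg _
  -- choice of small parameters
  set ε2 : ℝ := lam / (2 * Cb) with hε2def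
  have hε2 : 0 < ε2 := by positivity
  obtain ⟨δ1, hδ1, hs1⟩ := hstrict ((-c)/2) (by linarith)
  obtain ⟨δ2, hδ2, hs2⟩ := hstrict ε2 hε2
  set K : ℝ := Cb * CA + Cb * ε2 with hKdef
  have hK : 0 < K + 1 := by positivity
  set δ3 : ℝ := (-c) / (4 * (K + 1)) with hδ3def
  have hδ3 : 0 < δ3 := by
    apply div_pos (by linarith) (by positivity)
  clear_value c Cb CA ε2 K δ3
  refine ⟨min (min δ1 δ2) δ3, lt_min (lt_min hδ1 hδ2) hδ3, ?_⟩
  rintro ⟨y, z⟩ hx hxδ hz'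
  have hz : (0:ℝ) ≤ z := hz'
  rw [hdf]
  show (X (y, z)).2 + Pc y (X (y, z)).1 < 0
  -- basic norm facts
  have hyx : ‖y‖ ≤ ‖((y, z) : (Fin (n-1) → ℝ) × ℝ)‖ := by
    exact norm_fst_le ((y, z) : (Fin (n-1) → ℝ) × ℝ)
  have hzx : |z| ≤ ‖((y, z) : (Fin (n-1) → ℝ) × ℝ)‖ := by
    simpa using norm_snd_le ((y, z) : (Fin (n-1) → ℝ) × ℝ)
  have hy0 : ‖(((y, (0:ℝ))) : (Fin (n-1) → ℝ) × ℝ)‖ = ‖y‖ := by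
    rw [Prod.norm_def]
    simp [max_eq_left (norm_nonneg y)]
  have h0z : ‖((((0 : Fin (n-1) → ℝ), z)) : (Fin (n-1) → ℝ) × ℝ)‖ = z := by
    rw [Prod.norm_def]
    simp only [norm_zero, Real.norm_eq_abs, abs_of_nonneg hz]
    exact max_eq_right hz
  have hxsum : ‖((y, z) : (Fin (n-1) → ℝ) × ℝ)‖ ≤ ‖y‖ + z := by
    rw [Prod.norm_def]
    simp only [Real.norm_eq_abs]
    rw [abs_of_nonneg hz]
    exact max_le (by linarith [norm_nonneg y]) (by linarith [norm_nonneg y])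
  have hxδ1 : ‖((y, z) : (Fin (n-1) → ℝ) × ℝ)‖ < δ1 :=
    lt_of_lt_of_le hxδ (le_trans (min_le_left _ _) (min_le_left _ _))
  have hxδ2 : ‖((y, z) : (Fin (n-1) → ℝ) × ℝ)‖ < δ2 :=
    lt_of_lt_of_le hxδ (le_trans (min_le_left _ _) (min_le_right _ _))
  have hxδ3 : ‖((y, z) : (Fin (n-1) → ℝ) × ℝ)‖ < δ3 :=
    lt_of_lt_of_le hxδ (min_le_right _ _)
  -- z-component bound : X₂ ≤ (c/2) z
  have hz1 : (X (y, z)).2 ≤ c/2 * z := by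
    have h := hs1 (y, z) (y, 0) hxδ1 (by rw [hy0]; exact lt_of_le_of_lt hyx hxδ1)
    have hsub : ((y, z) : (Fin (n-1) → ℝ) × ℝ) - (y, 0) = ((0 : Fin (n-1) → ℝ), z) := by
      simp [Prod.ext_iff]
    rw [hsub] at h
    have hAz : (A (((0 : Fin (n-1) → ℝ), z) : (Fin (n-1) → ℝ) × ℝ)).2 = z * c := by
      have hzz : (((0 : Fin (n-1) → ℝ), z) : (Fin (n-1) → ℝ) × ℝ)
          = z • (((0 : Fin (n-1) → ℝ), (1:ℝ)) : (Fin (n-1) → ℝ) × ℝ) := by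
        simp [Prod.smul_def]
      rw [hzz, map_smul, Prod.smul_snd, smul_eq_mul, hcdef]
    have habs : |(X (y, z)).2 - (X (y, 0)).2 - (A (((0 : Fin (n-1) → ℝ), z) :
        (Fin (n-1) → ℝ) × ℝ)).2|
        ≤ (-c)/2 * ‖((((0 : Fin (n-1) → ℝ), z)) : (Fin (n-1) → ℝ) × ℝ)‖ := by
      refine le_trans ?_ h
      simpa using norm_snd_le (X (y, z) - X (y, 0)
        - A (((0 : Fin (n-1) → ℝ), z) : (Fin (n-1) → ℝ) × ℝ))
    rw [htangent y, hAz, h0z] at habs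
    have h2 := (abs_le.1 habs).2
    linarith
  -- error bound on the linearization
  have hr : ‖X (y, z) - A (y, z)‖ ≤ ε2 * ‖((y, z) : (Fin (n-1) → ℝ) × ℝ)‖ := by
    have h := hs2 (y, z) 0 hxδ2 (by simpa using hδ2)
    simpa [hX0] using h
  -- splitting of the first component
  have hsplit : Pc y (X (y, z)).1
      = Pc y (A ((y, 0) : (Fin (n-1) → ℝ) × ℝ)).1
        + Pc y (A (((0 : Fin (n-1) → ℝ), z) : (Fin (n-1) → ℝ) × ℝ)).1
        + Pc y ((X (y, z) - A (y, z)).1) := by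
    have hxadd : ((y, z) : (Fin (n-1) → ℝ) × ℝ) = (y, 0) + ((0 : Fin (n-1) → ℝ), z) := by
      simp [Prod.ext_iff]
    have h1 : (X (y, z)).1 = (A ((y, 0) : (Fin (n-1) → ℝ) × ℝ)).1
        + (A (((0 : Fin (n-1) → ℝ), z) : (Fin (n-1) → ℝ) × ℝ)).1
        + (X (y, z) - A (y, z)).1 := by
      have h2 : A ((y, z) : (Fin (n-1) → ℝ) × ℝ) = A ((y, 0) : (Fin (n-1) → ℝ) × ℝ)
          + A (((0 : Fin (n-1) → ℝ), z) : (Fin (n-1) → ℝ) × ℝ) := by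
        rw [← map_add, ← hxadd]
      rw [Prod.fst_sub, h2, Prod.fst_add]
      abel
    rw [h1, map_add, map_add]
  -- bounds on the pieces
  have hp1 : Pc y (A ((y, 0) : (Fin (n-1) → ℝ) × ℝ)).1 ≤ -lam * ‖y‖^2 := hlam2 y
  have hp2 : Pc y (A (((0 : Fin (n-1) → ℝ), z) : (Fin (n-1) → ℝ) × ℝ)).1
      ≤ Cb * ‖y‖ * (CA * z) := by
    refine le_trans (hPb _ _) ?_
    have h1 : ‖(A (((0 : Fin (n-1) → ℝ), z) : (Fin (n-1) → ℝ) × ℝ)).1‖ ≤ CA * z := by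
      refine le_trans (by exact norm_fst_le (A (((0 : Fin (n-1) → ℝ), z)
        : (Fin (n-1) → ℝ) × ℝ))) ?_
      have := A.le_opNorm ((((0 : Fin (n-1) → ℝ), z)) : (Fin (n-1) → ℝ) × ℝ)
      rw [h0z, ← hCAdef] at this
      exact this
    exact mul_le_mul_of_nonneg_left h1 (mul_nonneg hCb.le (norm_nonneg y))
  have hp3 : Pc y ((X (y, z) - A (y, z)).1)
      ≤ Cb * ‖y‖ * (ε2 * ‖((y, z) : (Fin (n-1) → ℝ) × ℝ)‖) := by
    refine le_trans (hPb _ _) ?_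
    have h1 : ‖(X (y, z) - A (y, z)).1‖ ≤ ε2 * ‖((y, z) : (Fin (n-1) → ℝ) × ℝ)‖ :=
      le_trans (by exact norm_fst_le (X (y, z) - A (y, z))) hr
    exact mul_le_mul_of_nonneg_left h1 (mul_nonneg hCb.le (norm_nonneg y))
  -- combine everything
  have hCbε2 : Cb * ε2 = lam / 2 := by
    rw [hε2def]
    field_simp
  have hKδ3 : (K + 1) * δ3 = (-c) / 4 := by
    have h6 : K + 1 ≠ 0 := ne_of_gt hK
    rw [hδ3def]
    field_simp
  have hyδ3 : ‖y‖ ≤ δ3 := le_of_lt (lt_of_le_of_lt hyx hxδ3)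
  have hny : (0:ℝ) ≤ ‖y‖ := norm_nonneg y
  have key : (X (y, z)).2 + Pc y (X (y, z)).1 ≤ c/4 * z - lam/2 * ‖y‖^2 := by
    have e1 : Pc y (X (y, z)).1 ≤ -lam * ‖y‖^2 + Cb * ‖y‖ * (CA * z)
        + Cb * ‖y‖ * (ε2 * (‖y‖ + z)) := by
      rw [hsplit]
      have h3 : Cb * ‖y‖ * (ε2 * ‖((y, z) : (Fin (n-1) → ℝ) × ℝ)‖)
          ≤ Cb * ‖y‖ * (ε2 * (‖y‖ + z)) := by
        refine mul_le_mul_of_nonneg_left ?_ (mul_nonneg hCb.le (norm_nonneg y))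
        exact mul_le_mul_of_nonneg_left hxsum (le_of_lt hε2)
      linarith
    have e2 : K * ‖y‖ * z ≤ (-c)/4 * z := by
      have h4 : K * ‖y‖ ≤ (K + 1) * δ3 := by
        have hKnn : (0:ℝ) ≤ K := by
          nlinarith [hKdef, mul_nonneg hCb.le hCA, mul_pos hCb hε2]
        have h5 : K * ‖y‖ ≤ K * δ3 := mul_le_mul_of_nonneg_left hyδ3 hKnn
        nlinarith
      rw [hKδ3] at h4
      exact mul_le_mul_of_nonneg_right h4 hz
    have e2' : (Cb * CA + Cb * ε2) * ‖y‖ * z ≤ (-c)/4 * z := hKdef ▸ e2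
    have e3 : Cb * ε2 * ‖y‖^2 ≤ lam/2 * ‖y‖^2 := by
      rw [hCbε2]
    nlinarith [hz1, e1, e2', e3, mul_nonneg hny hz]
  rcases hz.lt_or_eq with hzpos | hzzero
  · nlinarith [key, mul_pos (by linarith : (0:ℝ) < -c) hzpos,
      mul_nonneg (le_of_lt hlam) (sq_nonneg ‖y‖)]
  · have hyne : y ≠ 0 := by
      intro hy0'
      apply hx
      simp [Prod.ext_iff, hy0', hzzero.symm]
    have hnypos : (0:ℝ) < ‖y‖ := norm_pos_iff.2 hyne
    rw [← hzzero] at key ⊢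
    nlinarith [key, mul_pos hlam (mul_pos hnypos hnypos)]
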